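/- Let n ≥ 1, α ∈ (0,1), C > 0, and let u : ℝⁿ → ℝ be a differentiable function such that there exists a sequence r_k ↗ ∞ with r_k^α [∇u]_{C^α(B_{r_k/2})} ≤ C for every k, where [∇u]_{C^α(B_R)} := sup_{x≠y ∈ B_R} |∇u(x) − ∇u(y)|/|x−y|^α. Then ∇u is constant on ℝⁿ, i.e., u is an affine function. -/

import Mathlib

open MeasureTheory

/-- **Decaying Hölder seminorm of the gradient at large scales forces affineness.**
Let `n ≥ 1`, `α ∈ (0,1)`, `C > 0`, and let `u : ℝⁿ → ℝ` be differentiable. Suppose there is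
a sequence `r k ↗ ∞` of positive numbers with `r k ^ α [∇u]_{C^α(B_{r k / 2})} ≤ C` for
every `k` (equivalently, `r k ^ α * |∇u(x) - ∇u(y)| ≤ C * |x - y| ^ α` for all
`x, y ∈ B_{r k / 2}`). Then `∇u` is constant on `ℝⁿ`, i.e. `u` is an affine function. -/
theorem affine_of_decaying_holder_seminorm
    (n : ℕ) (hn : 1 ≤ n) (α : ℝ) (hα : α ∈ Set.Ioo (0 : ℝ) 1) (C : ℝ) (hC : 0 < C)
    (u : EuclideanSpace ℝ (Fin n) → ℝ) (hdiff : Differentiable ℝ u)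
    (r : ℕ → ℝ) (hrpos : ∀ k, 0 < r k) (hrmono : StrictMono r)
    (hrtop : Filter.Tendsto r Filter.atTop Filter.atTop)
    (hhold : ∀ k, ∀ x ∈ Metric.ball (0 : EuclideanSpace ℝ (Fin n)) (r k / 2),
      ∀ y ∈ Metric.ball (0 : EuclideanSpace ℝ (Fin n)) (r k / 2),
        r k ^ α * ‖gradient u x - gradient u y‖ ≤ C * ‖x - y‖ ^ α) :
    (∀ x y : EuclideanSpace ℝ (Fin n), gradient u x = gradient u y) ∧
      ∃ (a : EuclideanSpace ℝ (Fin n)) (b : ℝ), ∀ x, u x = (inner ℝ a x : ℝ) + b := by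
  have hgrad : ∀ x y : EuclideanSpace ℝ (Fin n), gradient u x = gradient u y := by
    intro x y
    by_contra h
    have hne : 0 < ‖gradient u x - gradient u y‖ := by
      simpa [sub_eq_zero] using h
    -- r k ^ α * ‖d‖ → ∞
    have hpow : Filter.Tendsto (fun k => r k ^ α) Filter.atTop Filter.atTop :=
      (tendsto_rpow_atTop hα.1).comp hrtop
    have hmul : Filter.Tendsto (fun k => r k ^ α * ‖gradient u x - gradient u y‖)
        Filter.atTop Filter.atTop := hpow.atTop_mul_const hne
    have h1 : ∀ᶠ k in Filter.atTop,
        C * ‖x - y‖ ^ α < r k ^ α * ‖gradient u x - gradient u y‖ :=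
      hmul.eventually_gt_atTop _
    have h2 : ∀ᶠ k in Filter.atTop, 2 * max ‖x‖ ‖y‖ + 1 < r k :=
      hrtop.eventually_gt_atTop _
    obtain ⟨k, hk1, hk2⟩ := (h1.and h2).exists
    have hxball : x ∈ Metric.ball (0 : EuclideanSpace ℝ (Fin n)) (r k / 2) := by
      rw [Metric.mem_ball, dist_zero_right]
      nlinarith [le_max_left ‖x‖ ‖y‖, norm_nonneg y]
    have hyball : y ∈ Metric.ball (0 : EuclideanSpace ℝ (Fin n)) (r k / 2) := by
      rw [Metric.mem_ball, dist_zero_right]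
      nlinarith [le_max_right ‖x‖ ‖y‖, norm_nonneg x]
    exact absurd (hhold k x hxball y hyball) (not_le.mpr hk1)
  refine ⟨hgrad, gradient u 0, u 0, fun x => ?_⟩
  set a := gradient u 0 with ha
  have hfd : ∀ z, HasFDerivAt u ((InnerProductSpace.toDual ℝ _) a : _ →L[ℝ] ℝ) z := by
    intro z
    have := (hdiff z).hasFDerivAt
    have hz : fderiv ℝ u z = (InnerProductSpace.toDual ℝ _) (gradient u z) := by
      simp [gradient]
    rw [hz, hgrad z 0] at this
    exact this
  set L : EuclideanSpace ℝ (Fin n) →L[ℝ] ℝ := (InnerProductSpace.toDual ℝ _) a with hL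
  have hg : ∀ z, HasFDerivAt (fun w => u w - L w) (0 : EuclideanSpace ℝ (Fin n) →L[ℝ] ℝ) z := by
    intro z
    have h := (hfd z).sub (L.hasFDerivAt)
    rw [sub_self] at h
    exact h
  have hconst : (fun w => u w - L w) x = (fun w => u w - L w) 0 := by
    have : ∀ z, fderiv ℝ (fun w => u w - L w) z = 0 := fun z => (hg z).fderiv
    exact is_const_of_fderiv_eq_zero (fun z => (hg z).differentiableAt) this x 0
  have hLx : L x = (inner ℝ a x : ℝ) := by simp [hL]
  simp only [map_zero] at hconst
  simp only [sub_zero] at hconst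
  linarith [hconst, hLx]
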